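/- Let A be a unit sign row matrix of size m × n, let S be an n × n diagonal matrix with strictly positive diagonal entries, set K = S·S, and let M be any n × m matrix satisfying the four Penrose equations for B = A·S. Then S·(I − M·(A·S))·S = (I − Aᵀ·A)·K; that is, the dynamics dθ/dτ = −K^{1/2}(I − (h̃_θ K^{1/2})⁺(h̃_θ K^{1/2}))K^{1/2} f_θ of Eq. (36) coincide with the dynamics dθ/dτ = −(I − h̃_θᵀ h̃_θ) K f_θ of Eq. (35). -/

import Mathlib

open Matrix

/-- A unit sign row matrix: each row has exactly one nonzero entry, equal to `±1`,
located in a distinct column. -/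
def IsUnitSignRow {m n : ℕ} (A : Matrix (Fin m) (Fin n) ℝ) : Prop :=
  ∃ (σ : Fin m → Fin n) (ε : Fin m → ℝ),
    Function.Injective σ ∧ (∀ i, ε i = 1 ∨ ε i = -1) ∧
    ∀ i j, A i j = if j = σ i then ε i else 0

/-- If `A` is a unit sign row matrix, `S` is diagonal with strictly positive
diagonal entries, `K = S·S`, and `M` satisfies the four Penrose equations for
`B = A·S`, then `S·(I − M·(A·S))·S = (I − Aᵀ·A)·K`; consequently the dynamics
`dθ/dτ = −K^{1/2}(I − (A K^{1/2})⁺(A K^{1/2}))K^{1/2} f_θ` of Eq. (36) coincide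
with the dynamics `dθ/dτ = −(I − Aᵀ A) K f_θ` of Eq. (35). -/
theorem eq36_coincides_eq35 {m n : ℕ} (A : Matrix (Fin m) (Fin n) ℝ)
    (hA : IsUnitSignRow A)
    (S : Matrix (Fin n) (Fin n) ℝ) (d : Fin n → ℝ)
    (hd : ∀ i, 0 < d i) (hS : S = Matrix.diagonal d)
    (K : Matrix (Fin n) (Fin n) ℝ) (hK : K = S * S)
    (M : Matrix (Fin n) (Fin m) ℝ)
    (h1 : (A * S) * M * (A * S) = A * S)
    (h2 : M * (A * S) * M = M)
    (h3 : ((A * S) * M)ᵀ = (A * S) * M)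
    (h4 : (M * (A * S))ᵀ = M * (A * S)) :
    S * ((1 : Matrix (Fin n) (Fin n) ℝ) - M * (A * S)) * S =
      ((1 : Matrix (Fin n) (Fin n) ℝ) - Aᵀ * A) * K ∧
    ∀ fθ : Fin n → ℝ,
      -((S * ((1 : Matrix (Fin n) (Fin n) ℝ) - M * (A * S)) * S) *ᵥ fθ) =
        -((((1 : Matrix (Fin n) (Fin n) ℝ) - Aᵀ * A) * K) *ᵥ fθ) := by
  obtain ⟨σ, ε, hσ, hε, hAe⟩ := hA
  have hd0 : ∀ i, d i ≠ 0 := fun i => (hd i).ne'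
  set N : Matrix (Fin n) (Fin m) ℝ :=
    Matrix.of fun j i => if j = σ i then ε i / d j else 0 with hN
  have hB : ∀ i k, (A * S) i k = if k = σ i then ε i * d k else 0 := by
    intro i k
    rw [hS, Matrix.mul_diagonal, hAe]
    split <;> simp
  -- B * N = 1
  have hBN : (A * S) * N = 1 := by
    ext i i'
    rw [Matrix.mul_apply]
    simp only [hB, hN, Matrix.of_apply]
    rw [Finset.sum_eq_single (σ i)]
    · by_cases hii : i = i'
      · subst hii
        simp [hd0, Matrix.one_apply]
        rcases hε i with h | h <;> simp [h] <;> field_simp <;>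
          exact div_self (hd0 _)
      · have : σ i ≠ σ i' := fun h => hii (hσ h)
        simp [this, Matrix.one_apply, hii]
    · intro b _ hb
      rw [if_neg hb, zero_mul]
    · simp
  -- N * B = Aᵀ * A
  have hNB : N * (A * S) = Aᵀ * A := by
    ext j k
    rw [Matrix.mul_apply, Matrix.mul_apply]
    apply Finset.sum_congr rfl
    intro i _
    simp only [hB, hN, Matrix.of_apply, Matrix.transpose_apply, hAe]
    by_cases hj : j = σ i
    · by_cases hk : k = σ i
      · subst hj; subst hk
        have hne := hd0 (σ i)
        simp only [if_pos rfl, ↓reduceIte]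
        field_simp
      · simp [hj, hk]
    · simp [hj]
  -- M * B = N * B
  have hMB : M * (A * S) = N * (A * S) := by
    have e1 : M * (A * S) = (M * (A * S)) * (N * (A * S)) := by
      conv_rhs => rw [← Matrix.mul_assoc, Matrix.mul_assoc M, hBN, Matrix.mul_one]
    have hNBsym : (N * (A * S))ᵀ = N * (A * S) := by
      rw [hNB]; exact (Matrix.transpose_mul _ _).trans (by rw [Matrix.transpose_transpose])
    have e2 : M * (A * S) = (N * (A * S)) * (M * (A * S)) := by
      conv_lhs => rw [← h4, e1]
      rw [Matrix.transpose_mul, h4, hNBsym]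
    have e3 : N * (A * S) = (N * (A * S)) * (M * (A * S)) := by
      conv_rhs => rw [← Matrix.mul_assoc, Matrix.mul_assoc N, Matrix.mul_assoc N, h1]
    rw [e2, ← e3]
  -- Aᵀ * A commutes with S
  have hcomm : S * (Aᵀ * A) = (Aᵀ * A) * S := by
    have hoff : ∀ j k, j ≠ k → (Aᵀ * A) j k = 0 := by
      intro j k hjk
      rw [Matrix.mul_apply]
      apply Finset.sum_eq_zero
      intro i _
      rw [Matrix.transpose_apply, hAe, hAe]
      by_cases hj : j = σ i
      · have : k ≠ σ i := fun h => hjk (hj.trans h.symm)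
        simp [this]
      · simp [hj]
    ext j k
    simp only [hS, Matrix.diagonal_mul, Matrix.mul_diagonal]
    by_cases hjk : j = k
    · subst hjk; ring
    · rw [hoff j k hjk]; ring
  have key : S * ((1 : Matrix (Fin n) (Fin n) ℝ) - M * (A * S)) * S =
      ((1 : Matrix (Fin n) (Fin n) ℝ) - Aᵀ * A) * K := by
    rw [hMB, hNB, hK, Matrix.mul_sub, Matrix.mul_one, Matrix.sub_mul, Matrix.sub_mul,
      Matrix.one_mul, hcomm, Matrix.mul_assoc]
  exact ⟨key, fun fθ => by rw [key]⟩
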